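/- arXiv:2510.06437 — 2 statements merged into one kernel-verified Lean document; each statement's English description precedes it below -/
import Mathlib

section
/- The mutation sequence μ₁, μ₂, μ₁, μ₂, μ₁ applied to the initial seed of the A₂ cluster algebra returns the initial cluster variables up to a swap; in particular the mutation dynamics is periodic of period 5 on clusters. -/
/-!
STATEMENT 2: Applying the mutation sequence μ₁, μ₂, μ₁, μ₂, μ₁ to the initial
seed of the A₂ cluster algebra returns the initial cluster variables up to a
swap (period 5 on clusters).
-/

noncomputable section

/-- The ambient field ℚ(X₁, X₂). -/
abbrev K0 : Type := FractionRing (MvPolynomial (Fin 2) ℚ)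

/-- The initial cluster variables X₁, X₂. -/
noncomputable def Xv (i : Fin 2) : K0 :=
  algebraMap (MvPolynomial (Fin 2) ℚ) K0 (MvPolynomial.X i)

/-- Mutation at vertex 1 (`b = true`) or vertex 2 (`b = false`): for the A₂
quiver with one arrow between the two vertices, the exchange relation
Xᵢ·Xᵢ* = ∏_{j→i} Xⱼ + ∏_{j←i} Xⱼ gives Xᵢ* = (1 + X_other)/Xᵢ independently of
the current orientation of the arrow (which gets reversed by the mutation). -/
noncomputable def mutateA2 (b : Bool) (p : K0 × K0) : K0 × K0 :=
  if b then ((1 + p.2) / p.1, p.2) else (p.1, (1 + p.1) / p.2)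

/-- The clusters obtained by the alternating mutations μ₁, μ₂, μ₁, μ₂, μ₁, …
from the initial seed ((X₁,X₂), 1→2). -/
noncomputable def seedA2 : ℕ → K0 × K0
  | 0 => (Xv 0, Xv 1)
  | n + 1 => mutateA2 (n % 2 == 0) (seedA2 n)

lemma keyA2 (p : MvPolynomial (Fin 2) ℚ)
    (hp : MvPolynomial.eval (fun _ => (1:ℚ)) p ≠ 0) :
    algebraMap (MvPolynomial (Fin 2) ℚ) K0 p ≠ 0 := by
  intro h0
  have hp0 : p = 0 := IsFractionRing.injective (MvPolynomial (Fin 2) ℚ) K0 (by rw [map_zero]; exact h0)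
  rw [hp0] at hp; simp at hp

set_option maxHeartbeats 1000000 in
/-- After the five mutations μ₁, μ₂, μ₁, μ₂, μ₁ the unordered pair of cluster
variables is again {X₁, X₂}. -/
theorem period_five_A2 :
    ({(seedA2 5).1, (seedA2 5).2} : Set K0) = {Xv 0, Xv 1} := by
  have hx : Xv 0 ≠ 0 := keyA2 _ (by simp)
  have hy : Xv 1 ≠ 0 := keyA2 _ (by simp)
  have h1y : (1:K0) + Xv 1 ≠ 0 := by
    have : (1:K0) + Xv 1 = algebraMap (MvPolynomial (Fin 2) ℚ) K0 (1 + MvPolynomial.X 1) := by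
      simp [Xv]
    rw [this]; exact keyA2 _ (by simp)
  have h1x : (1:K0) + Xv 0 ≠ 0 := by
    have : (1:K0) + Xv 0 = algebraMap (MvPolynomial (Fin 2) ℚ) K0 (1 + MvPolynomial.X 0) := by
      simp [Xv]
    rw [this]; exact keyA2 _ (by norm_num)
  have hxy : (1:K0) + Xv 0 + Xv 1 ≠ 0 := by
    have : (1:K0) + Xv 0 + Xv 1 =
        algebraMap (MvPolynomial (Fin 2) ℚ) K0 (1 + MvPolynomial.X 0 + MvPolynomial.X 1) := by
      simp [Xv]
    rw [this]; exact keyA2 _ (by norm_num)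
  have e1 : seedA2 1 = ((1 + Xv 1) / Xv 0, Xv 1) := by
    show mutateA2 _ (Xv 0, Xv 1) = _
    simp [mutateA2]
  have e2 : seedA2 2 = ((1 + Xv 1) / Xv 0, (1 + Xv 0 + Xv 1) / (Xv 0 * Xv 1)) := by
    show mutateA2 _ (seedA2 1) = _
    rw [e1]; simp only [mutateA2]; norm_num
    field_simp; ring
  have e3 : seedA2 3 = ((1 + Xv 0) / Xv 1, (1 + Xv 0 + Xv 1) / (Xv 0 * Xv 1)) := by
    show mutateA2 _ (seedA2 2) = _
    rw [e2]; simp only [mutateA2]; norm_num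
    field_simp; ring
  have e4 : seedA2 4 = ((1 + Xv 0) / Xv 1, Xv 0) := by
    show mutateA2 _ (seedA2 3) = _
    rw [e3]; simp only [mutateA2]; norm_num
    field_simp; ring
  have e5 : seedA2 5 = (Xv 1, Xv 0) := by
    show mutateA2 _ (seedA2 4) = _
    rw [e4]; simp only [mutateA2]; norm_num
    rw [div_div_eq_mul_div, mul_comm (1 + Xv 0) (Xv 1)]
    exact mul_div_cancel_right₀ (Xv 1) h1x
  rw [e5]
  exact Set.pair_comm _ _
end
end

section
/- For the map Θ defined on Laurent monomials in variables Y_{j,a} by Θ(Y_{j,a}) = Y_{j,a}·A_{i,aq^{−1}}^{−δ_{ij}}·(Σ_{i,aq^{−3}}/Σ_{i,aq^{−1}})^{δ_{ij}} in the sl₂ case (single index i = j = 1, A_{1,a} = Y_{1,aq^{−1}}Y_{1,aq} and Σ_{1,a} = ∑_{k≥0}∏_{j=0}^{k−1}A_{1,aq^{−2j}}^{−1}), the element χ(a) = Y_{1,a} + Y_{1,aq²}^{−1} is fixed: Θ(Y_{1,a}) + Θ(Y_{1,aq²})^{−1} = Y_{1,a} + Y_{1,aq²}^{−1}. -/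
/-!
STATEMENT 15: In the sl₂ case, the Weyl group operator Θ, defined on the
generators by Θ(Y_{1,b}) = Y_{1,b}·A_{1,bq^{−1}}^{−1}·Σ_{1,bq^{−3}}/Σ_{1,bq^{−1}}
with A_{1,b} = Y_{1,bq^{−1}}Y_{1,bq} and Σ_{1,b} = 1 + A_{1,b}^{−1}Σ_{1,bq^{−2}},
fixes the q-character of the fundamental representation:
Θ(Y_{1,a}) + Θ(Y_{1,aq²})^{−1} = Y_{1,a} + Y_{1,aq²}^{−1}.

The completion of ℤ[Y_{1,aq^r}^{±1}] is modelled by an arbitrary commutative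
ring R in which the Y's, the A's and the Σ's are units; spectral parameters
aq^k are encoded by the integer k.
-/

theorem theta_fixes_qcharacter
    (R : Type*) [CommRing R] (Y A Sg ΘY : ℤ → Rˣ)
    -- A_{1,b} = Y_{1,bq^{−1}}·Y_{1,bq}
    (hA : ∀ b : ℤ, A b = Y (b - 1) * Y (b + 1))
    -- the q-difference equation Σ_{1,b} = 1 + A_{1,b}^{−1}·Σ_{1,bq^{−2}}
    (hSg : ∀ b : ℤ, (Sg b : R) = 1 + ((A b)⁻¹ : Rˣ) * (Sg (b - 2) : R))
    -- Θ(Y_{1,b}) = Y_{1,b}·A_{1,bq^{−1}}^{−1}·Σ_{1,bq^{−3}}·Σ_{1,bq^{−1}}^{−1}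
    (hΘY : ∀ b : ℤ, ΘY b = Y b * (A (b - 1))⁻¹ * Sg (b - 3) * (Sg (b - 1))⁻¹) :
    ∀ a : ℤ,
      ((ΘY a : R) + ((ΘY (a + 2))⁻¹ : Rˣ)) = (Y a : R) + ((Y (a + 2))⁻¹ : Rˣ) := by
  intro a
  have e1 : a + 2 - 1 = a + 1 := by ring
  have e2 : a + 2 - 3 = a - 1 := by ring
  have e3 : a + 1 - 2 = a - 1 := by ring
  have h1 : (Sg (a - 1) : R) = 1 + ((A (a-1))⁻¹ : Rˣ) * (Sg (a - 3) : R) := by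
    have := hSg (a - 1); rw [show a - 1 - 2 = a - 3 by ring] at this; exact this
  have h2 : (Sg (a + 1) : R) = 1 + ((A (a+1))⁻¹ : Rˣ) * (Sg (a - 1) : R) := by
    have := hSg (a + 1); rw [e3] at this; exact this
  have h3 : (A (a+1) : R) = (Y a : R) * (Y (a+2) : R) := by
    rw [hA (a+1), show a + 1 - 1 = a by ring, show a + 1 + 1 = a + 2 by ring]
    push_cast; ring
  have h4 : (Y (a+2) : R) * ((Y (a+2))⁻¹ : Rˣ) = 1 := Units.mul_inv _
  have h5 : (A (a+1) : R) * ((A (a+1))⁻¹ : Rˣ) = 1 := Units.mul_inv _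
  have h6 : (Sg (a-1) : R) * ((Sg (a-1))⁻¹ : Rˣ) = 1 := Units.mul_inv _
  rw [hΘY a, hΘY (a+2), e1, e2]
  rw [show (Y (a+2) * (A (a+1))⁻¹ * Sg (a-1) * (Sg (a+1))⁻¹)⁻¹
      = (Y (a+2))⁻¹ * (A (a+1)) * (Sg (a-1))⁻¹ * (Sg (a+1)) by rw [mul_inv, mul_inv, mul_inv, inv_inv, inv_inv]]
  push_cast
  linear_combination (-(Y a : R) * ((Sg (a-1))⁻¹ : Rˣ)) * h1
    + (((Y (a+2))⁻¹ : Rˣ) * (A (a+1) : R) * ((Sg (a-1))⁻¹ : Rˣ)) * h2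
    + (((Y (a+2))⁻¹ : Rˣ) * ((Sg (a-1))⁻¹ : Rˣ)) * h3
    + ((Y a : R) * ((Sg (a-1))⁻¹ : Rˣ)) * h4
    + (((Y (a+2))⁻¹ : Rˣ) * ((Sg (a-1))⁻¹ : Rˣ) * (Sg (a-1) : R)) * h5
    + ((((Y (a+2))⁻¹ : Rˣ) : R) + (Y a : R)) * h6
end
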